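/- arXiv:2101.08160 — 5 statements merged into one kernel-verified Lean document; each statement's English description precedes it below -/
import Mathlib

section
/- Under Gauss' variational equations, the parameter σ = Ω + ω + v − s (the difference between the true longitude and the ideal anomaly) is differentiable with derivative σ'(t) = √(a(1−e²)/μ) · tan(i/2) · sin(ω+v)/(1+e·cos(v)) · ϱ_N(t) at every t; in particular σ' does not depend on the radial and transverse perturbations ϱ_R and ϱ_T (the R- and T-contributions coming from ω', v' and s' cancel exactly). -/
set_option maxHeartbeats 2000000


open Real

/-- Under Gauss' variational equations, σ = Ω + ω + v − s is differentiable with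
σ' = √(a(1−e²)/μ)·tan(i/2)·sin(ω+v)/(1+e·cos v)·ϱ_N; in particular σ' does not
depend on the radial and transverse perturbations. -/
theorem sigma_deriv_depends_only_on_normal_perturbation
    (μ : ℝ) (a e i ω Ω v s ϱR ϱT ϱN : ℝ → ℝ)
    (hμ : 0 < μ)
    (ha : ∀ t, 0 < a t)
    (he0 : ∀ t, 0 < e t) (he1 : ∀ t, e t < 1)
    (hsini : ∀ t, Real.sin (i t) ≠ 0)
    (hcosi : ∀ t, Real.cos (i t / 2) ≠ 0)
    (hden : ∀ t, 0 < 1 + e t * Real.cos (v t))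
    (hA : ∀ t, HasDerivAt a
      (2 * (a t) ^ 2 / Real.sqrt (μ * a t * (1 - (e t) ^ 2)) *
        (e t * Real.sin (v t) * ϱR t + (1 + e t * Real.cos (v t)) * ϱT t)) t)
    (hE : ∀ t, HasDerivAt e
      (Real.sqrt (a t * (1 - (e t) ^ 2) / μ) *
        (Real.sin (v t) * ϱR t +
          (e t + (2 + e t * Real.cos (v t)) * Real.cos (v t)) / (1 + e t * Real.cos (v t)) * ϱT t)) t)
    (hI : ∀ t, HasDerivAt i
      (Real.sqrt (a t * (1 - (e t) ^ 2) / μ) *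
        (Real.cos (v t + ω t) / (1 + e t * Real.cos (v t)) * ϱN t)) t)
    (hΩ : ∀ t, HasDerivAt Ω
      (Real.sqrt (a t * (1 - (e t) ^ 2) / μ) *
        (Real.sin (v t + ω t) / ((1 + e t * Real.cos (v t)) * Real.sin (i t)) * ϱN t)) t)
    (hω : ∀ t, HasDerivAt ω
      (Real.sqrt (a t * (1 - (e t) ^ 2) / μ) *
        (-(Real.cos (v t) / e t) * ϱR t +
          (2 + e t * Real.cos (v t)) * Real.sin (v t) / (e t * (1 + e t * Real.cos (v t))) * ϱT t -
          Real.sin (v t + ω t) * Real.cot (i t) / (1 + e t * Real.cos (v t)) * ϱN t)) t)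
    (hV : ∀ t, HasDerivAt v
      (Real.sqrt (μ / (a t) ^ 3) * (1 + e t * Real.cos (v t)) ^ 2 / (1 - (e t) ^ 2) ^ ((3 : ℝ) / 2) +
        Real.sqrt (a t * (1 - (e t) ^ 2) / μ) *
          (Real.cos (v t) / e t * ϱR t -
            (2 + e t * Real.cos (v t)) * Real.sin (v t) / (e t * (1 + e t * Real.cos (v t))) * ϱT t)) t)
    (hS : ∀ t, HasDerivAt s
      (Real.sqrt (μ / (a t) ^ 3) * (1 + e t * Real.cos (v t)) ^ 2 / (1 - (e t) ^ 2) ^ ((3 : ℝ) / 2)) t) :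
    ∀ t, HasDerivAt (fun τ => Ω τ + ω τ + v τ - s τ)
      (Real.sqrt (a t * (1 - (e t) ^ 2) / μ) * Real.tan (i t / 2) *
        (Real.sin (ω t + v t) / (1 + e t * Real.cos (v t))) * ϱN t) t := by
  intro t
  have h := (((hΩ t).add (hω t)).add (hV t)).sub (hS t)
  have hsin := hsini t
  have hcos := hcosi t
  have hs2 : Real.sin (i t) = 2 * Real.sin (i t / 2) * Real.cos (i t / 2) := by
    have := Real.sin_two_mul (i t / 2)
    rw [show 2 * (i t / 2) = i t by ring] at this
    linarith
  have hc2 : Real.cos (i t) = 2 * Real.cos (i t / 2) ^ 2 - 1 := by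
    have := Real.cos_two_mul (i t / 2)
    rw [show 2 * (i t / 2) = i t by ring] at this
    linarith
  have key : Real.cot (i t) = 1 / Real.sin (i t) - Real.tan (i t / 2) := by
    rw [Real.cot_eq_cos_div_sin, Real.tan_eq_sin_div_cos]
    have hpy := Real.sin_sq_add_cos_sq (i t / 2)
    rw [hs2, hc2]
    have hshalf : Real.sin (i t / 2) ≠ 0 := by
      intro h0; apply hsin; rw [hs2, h0]; ring
    field_simp
    linear_combination 2 * hpy
  refine h.congr_deriv ?_
  rw [key, show ω t + v t = v t + ω t by ring]
  have hd := (hden t).ne'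
  field_simp
  ring
end

section
/- Under Gauss' variational equations, the semiparameter p = a(1−e²) is differentiable with derivative p'(t) = 2·(a(1−e²)/(1+e·cos(v)))·√(a(1−e²)/μ)·ϱ_T(t) at every t; in particular p' does not depend on the radial and normal perturbations ϱ_R and ϱ_N. -/
open Real

/-- Under Gauss' variational equations, the semiparameter p = a(1−e²) is differentiable with
p' = 2·(a(1−e²)/(1+e·cos v))·√(a(1−e²)/μ)·ϱ_T; in particular p' does not depend on ϱ_R, ϱ_N. -/
theorem semiparameter_deriv_depends_only_on_transverse_perturbation
    (μ : ℝ) (a e i ω Ω v s ϱR ϱT ϱN : ℝ → ℝ)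
    (hμ : 0 < μ)
    (ha : ∀ t, 0 < a t)
    (he0 : ∀ t, 0 < e t) (he1 : ∀ t, e t < 1)
    (hsini : ∀ t, Real.sin (i t) ≠ 0)
    (hcosi : ∀ t, Real.cos (i t / 2) ≠ 0)
    (hden : ∀ t, 0 < 1 + e t * Real.cos (v t))
    (hA : ∀ t, HasDerivAt a
      (2 * (a t) ^ 2 / Real.sqrt (μ * a t * (1 - (e t) ^ 2)) *
        (e t * Real.sin (v t) * ϱR t + (1 + e t * Real.cos (v t)) * ϱT t)) t)
    (hE : ∀ t, HasDerivAt e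
      (Real.sqrt (a t * (1 - (e t) ^ 2) / μ) *
        (Real.sin (v t) * ϱR t +
          (e t + (2 + e t * Real.cos (v t)) * Real.cos (v t)) / (1 + e t * Real.cos (v t)) * ϱT t)) t)
    (hI : ∀ t, HasDerivAt i
      (Real.sqrt (a t * (1 - (e t) ^ 2) / μ) *
        (Real.cos (v t + ω t) / (1 + e t * Real.cos (v t)) * ϱN t)) t)
    (hΩ : ∀ t, HasDerivAt Ω
      (Real.sqrt (a t * (1 - (e t) ^ 2) / μ) *
        (Real.sin (v t + ω t) / ((1 + e t * Real.cos (v t)) * Real.sin (i t)) * ϱN t)) t)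
    (hω : ∀ t, HasDerivAt ω
      (Real.sqrt (a t * (1 - (e t) ^ 2) / μ) *
        (-(Real.cos (v t) / e t) * ϱR t +
          (2 + e t * Real.cos (v t)) * Real.sin (v t) / (e t * (1 + e t * Real.cos (v t))) * ϱT t -
          Real.sin (v t + ω t) * Real.cot (i t) / (1 + e t * Real.cos (v t)) * ϱN t)) t)
    (hV : ∀ t, HasDerivAt v
      (Real.sqrt (μ / (a t) ^ 3) * (1 + e t * Real.cos (v t)) ^ 2 / (1 - (e t) ^ 2) ^ ((3 : ℝ) / 2) +
        Real.sqrt (a t * (1 - (e t) ^ 2) / μ) *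
          (Real.cos (v t) / e t * ϱR t -
            (2 + e t * Real.cos (v t)) * Real.sin (v t) / (e t * (1 + e t * Real.cos (v t))) * ϱT t)) t)
    (hS : ∀ t, HasDerivAt s
      (Real.sqrt (μ / (a t) ^ 3) * (1 + e t * Real.cos (v t)) ^ 2 / (1 - (e t) ^ 2) ^ ((3 : ℝ) / 2)) t) :
    ∀ t, HasDerivAt (fun τ => a τ * (1 - (e τ) ^ 2))
      (2 * (a t * (1 - (e t) ^ 2) / (1 + e t * Real.cos (v t))) *
        Real.sqrt (a t * (1 - (e t) ^ 2) / μ) * ϱT t) t := by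
  intro t
  have hE2 : 0 < 1 - (e t) ^ 2 := by nlinarith [he0 t, he1 t]
  have hApos := ha t
  have hD := hden t
  have hSpos : 0 < Real.sqrt (μ * a t * (1 - (e t) ^ 2)) := Real.sqrt_pos.mpr (by positivity)
  have hS2 : Real.sqrt (μ * a t * (1 - (e t) ^ 2)) ^ 2 = μ * a t * (1 - (e t) ^ 2) :=
    Real.sq_sqrt (by positivity)
  have h2 : Real.sqrt (a t * (1 - (e t) ^ 2) / μ)
      = Real.sqrt (μ * a t * (1 - (e t) ^ 2)) / μ := by
    rw [show a t * (1 - (e t) ^ 2) / μ = μ * a t * (1 - (e t) ^ 2) / μ ^ 2 by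
      field_simp]
    rw [Real.sqrt_div (by positivity), Real.sqrt_sq hμ.le]
  have h1 : 2 * (a t) ^ 2 / Real.sqrt (μ * a t * (1 - (e t) ^ 2))
      = 2 * a t * Real.sqrt (μ * a t * (1 - (e t) ^ 2)) / (μ * (1 - (e t) ^ 2)) := by
    rw [div_eq_div_iff hSpos.ne' (by positivity)]
    nlinarith [hS2]
  have hd : HasDerivAt (fun τ => a τ * (1 - (e τ) ^ 2)) _ t := (hA t).mul ((hasDerivAt_const t (1 : ℝ)).sub ((hE t).pow 2))
  convert hd using 1
  rw [h1, h2]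
  field_simp
  ring
end

section
/- Under Gauss' variational equations, the rotated eccentricity-vector components e_x = e·cos(Ω+ω)·cos(σ) + e·sin(Ω+ω)·sin(σ) and e_y = −e·cos(Ω+ω)·sin(σ) + e·sin(Ω+ω)·cos(σ), where σ = Ω + ω + v − s, are differentiable with derivatives e_x'(t) = √(a(1−e²)/μ)·( sin(s)·ϱ_R + (2·cos(s) + e·sin(v)·sin(s)/(1+e·cos(v)))·ϱ_T ) and e_y'(t) = √(a(1−e²)/μ)·( −cos(s)·ϱ_R + (2·sin(s) − e·sin(v)·cos(s)/(1+e·cos(v)))·ϱ_T ) at every t; in particular neither derivative depends on the normal perturbation ϱ_N. -/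
open Real

private lemma aux_ex (c K er et ee cv sv cs ss : ℝ) (h1 : 1 + ee*cv ≠ 0) (hee : ee ≠ 0)
    (hpy : sv^2+cv^2 = 1) :
    c * (sv*er + (ee+(2+ee*cv)*cv)/(1+ee*cv)*et) * (cs*cv + ss*sv)
      + ee * (-(ss*cv - cs*sv) * (K - (K + c*(cv/ee*er - (2+ee*cv)*sv/(ee*(1+ee*cv))*et))))
    = c * (ss*er + (2*cs + ee*sv*ss/(1+ee*cv))*et) := by
  field_simp
  linear_combination ((c*er*ss*(1+ee*cv) + c*et*cs*(2+ee*cv))) * hpy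

private lemma aux_ey (c K er et ee cv sv cs ss : ℝ) (h1 : 1 + ee*cv ≠ 0) (hee : ee ≠ 0)
    (hpy : sv^2+cv^2 = 1) :
    c * (sv*er + (ee+(2+ee*cv)*cv)/(1+ee*cv)*et) * (ss*cv - cs*sv)
      + ee * ((cs*cv + ss*sv) * (K - (K + c*(cv/ee*er - (2+ee*cv)*sv/(ee*(1+ee*cv))*et))))
    = c * (-cs*er + (2*ss - ee*sv*cs/(1+ee*cv))*et) := by
  field_simp
  linear_combination ((c*et*ss*(2+ee*cv) - c*er*cs*(1+ee*cv))) * hpy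

/-- Under Gauss' variational equations, the rotated eccentricity-vector components
e_x = e·cos(Ω+ω)·cos σ + e·sin(Ω+ω)·sin σ and e_y = −e·cos(Ω+ω)·sin σ + e·sin(Ω+ω)·cos σ
(with σ = Ω + ω + v − s) are differentiable with the stated derivatives; in particular
neither derivative depends on the normal perturbation ϱ_N. -/
theorem rotated_eccentricity_deriv_independent_of_normal_perturbation
    (μ : ℝ) (a e i ω Ω v s ϱR ϱT ϱN : ℝ → ℝ)
    (hμ : 0 < μ)
    (ha : ∀ t, 0 < a t)
    (he0 : ∀ t, 0 < e t) (he1 : ∀ t, e t < 1)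
    (hsini : ∀ t, Real.sin (i t) ≠ 0)
    (hcosi : ∀ t, Real.cos (i t / 2) ≠ 0)
    (hden : ∀ t, 0 < 1 + e t * Real.cos (v t))
    (hA : ∀ t, HasDerivAt a
      (2 * (a t) ^ 2 / Real.sqrt (μ * a t * (1 - (e t) ^ 2)) *
        (e t * Real.sin (v t) * ϱR t + (1 + e t * Real.cos (v t)) * ϱT t)) t)
    (hE : ∀ t, HasDerivAt e
      (Real.sqrt (a t * (1 - (e t) ^ 2) / μ) *
        (Real.sin (v t) * ϱR t +
          (e t + (2 + e t * Real.cos (v t)) * Real.cos (v t)) / (1 + e t * Real.cos (v t)) * ϱT t)) t)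
    (hI : ∀ t, HasDerivAt i
      (Real.sqrt (a t * (1 - (e t) ^ 2) / μ) *
        (Real.cos (v t + ω t) / (1 + e t * Real.cos (v t)) * ϱN t)) t)
    (hΩ : ∀ t, HasDerivAt Ω
      (Real.sqrt (a t * (1 - (e t) ^ 2) / μ) *
        (Real.sin (v t + ω t) / ((1 + e t * Real.cos (v t)) * Real.sin (i t)) * ϱN t)) t)
    (hω : ∀ t, HasDerivAt ω
      (Real.sqrt (a t * (1 - (e t) ^ 2) / μ) *
        (-(Real.cos (v t) / e t) * ϱR t +
          (2 + e t * Real.cos (v t)) * Real.sin (v t) / (e t * (1 + e t * Real.cos (v t))) * ϱT t -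
          Real.sin (v t + ω t) * Real.cot (i t) / (1 + e t * Real.cos (v t)) * ϱN t)) t)
    (hV : ∀ t, HasDerivAt v
      (Real.sqrt (μ / (a t) ^ 3) * (1 + e t * Real.cos (v t)) ^ 2 / (1 - (e t) ^ 2) ^ ((3 : ℝ) / 2) +
        Real.sqrt (a t * (1 - (e t) ^ 2) / μ) *
          (Real.cos (v t) / e t * ϱR t -
            (2 + e t * Real.cos (v t)) * Real.sin (v t) / (e t * (1 + e t * Real.cos (v t))) * ϱT t)) t)
    (hS : ∀ t, HasDerivAt s
      (Real.sqrt (μ / (a t) ^ 3) * (1 + e t * Real.cos (v t)) ^ 2 / (1 - (e t) ^ 2) ^ ((3 : ℝ) / 2)) t) :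
    ∀ t,
      HasDerivAt (fun τ => e τ * Real.cos (Ω τ + ω τ) * Real.cos (Ω τ + ω τ + v τ - s τ) +
          e τ * Real.sin (Ω τ + ω τ) * Real.sin (Ω τ + ω τ + v τ - s τ))
        (Real.sqrt (a t * (1 - (e t) ^ 2) / μ) *
          (Real.sin (s t) * ϱR t +
            (2 * Real.cos (s t) +
              e t * Real.sin (v t) * Real.sin (s t) / (1 + e t * Real.cos (v t))) * ϱT t)) t ∧
      HasDerivAt (fun τ => -(e τ * Real.cos (Ω τ + ω τ)) * Real.sin (Ω τ + ω τ + v τ - s τ) +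
          e τ * Real.sin (Ω τ + ω τ) * Real.cos (Ω τ + ω τ + v τ - s τ))
        (Real.sqrt (a t * (1 - (e t) ^ 2) / μ) *
          (-Real.cos (s t) * ϱR t +
            (2 * Real.sin (s t) -
              e t * Real.sin (v t) * Real.cos (s t) / (1 + e t * Real.cos (v t))) * ϱT t)) t := by
  intro t
  have hden' : (1 : ℝ) + e t * Real.cos (v t) ≠ 0 := ne_of_gt (hden t)
  have he' : e t ≠ 0 := ne_of_gt (he0 t)
  have hpy : Real.sin (v t) ^ 2 + Real.cos (v t) ^ 2 = 1 := Real.sin_sq_add_cos_sq (v t)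
  have hw : HasDerivAt (fun τ => s τ - v τ)
      (Real.sqrt (μ / (a t) ^ 3) * (1 + e t * Real.cos (v t)) ^ 2 / (1 - (e t) ^ 2) ^ ((3 : ℝ) / 2) -
        (Real.sqrt (μ / (a t) ^ 3) * (1 + e t * Real.cos (v t)) ^ 2 / (1 - (e t) ^ 2) ^ ((3 : ℝ) / 2) +
          Real.sqrt (a t * (1 - (e t) ^ 2) / μ) *
            (Real.cos (v t) / e t * ϱR t -
              (2 + e t * Real.cos (v t)) * Real.sin (v t) / (e t * (1 + e t * Real.cos (v t))) * ϱT t))) t :=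
    (hS t).sub (hV t)
  constructor
  · have hfun : (fun τ => e τ * Real.cos (Ω τ + ω τ) * Real.cos (Ω τ + ω τ + v τ - s τ) +
          e τ * Real.sin (Ω τ + ω τ) * Real.sin (Ω τ + ω τ + v τ - s τ))
        = fun τ => e τ * Real.cos (s τ - v τ) := by
      funext τ
      have h : Ω τ + ω τ + v τ - s τ = (Ω τ + ω τ) - (s τ - v τ) := by ring
      rw [h]
      simp only [Real.cos_sub, Real.sin_sub]
      linear_combination e τ * (Real.cos (s τ) * Real.cos (v τ) + Real.sin (s τ) * Real.sin (v τ)) * Real.sin_sq_add_cos_sq (Ω τ + ω τ)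
    rw [hfun]
    have hd := (hE t).mul hw.cos
    convert hd using 1
    · rfl
    · rfl
    · rfl
    rw [Real.cos_sub, Real.sin_sub]
    linear_combination (-1 : ℝ) *
      aux_ex (Real.sqrt (a t * (1 - (e t) ^ 2) / μ))
        (Real.sqrt (μ / (a t) ^ 3) * (1 + e t * Real.cos (v t)) ^ 2 / (1 - (e t) ^ 2) ^ ((3 : ℝ) / 2))
        (ϱR t) (ϱT t) (e t) (Real.cos (v t)) (Real.sin (v t)) (Real.cos (s t)) (Real.sin (s t))
        hden' he' hpy
  · have hfun : (fun τ => -(e τ * Real.cos (Ω τ + ω τ)) * Real.sin (Ω τ + ω τ + v τ - s τ) +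
          e τ * Real.sin (Ω τ + ω τ) * Real.cos (Ω τ + ω τ + v τ - s τ))
        = fun τ => e τ * Real.sin (s τ - v τ) := by
      funext τ
      have h : Ω τ + ω τ + v τ - s τ = (Ω τ + ω τ) - (s τ - v τ) := by ring
      rw [h]
      simp only [Real.cos_sub, Real.sin_sub]
      linear_combination e τ * (Real.sin (s τ) * Real.cos (v τ) - Real.cos (s τ) * Real.sin (v τ)) * Real.sin_sq_add_cos_sq (Ω τ + ω τ)
    rw [hfun]
    have hd := (hE t).mul hw.sin
    convert hd using 1
    · rfl
    · rfl
    · rfl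
    rw [Real.cos_sub, Real.sin_sub]
    linear_combination (-1 : ℝ) *
      aux_ey (Real.sqrt (a t * (1 - (e t) ^ 2) / μ))
        (Real.sqrt (μ / (a t) ^ 3) * (1 + e t * Real.cos (v t)) ^ 2 / (1 - (e t) ^ 2) ^ ((3 : ℝ) / 2))
        (ϱR t) (ϱT t) (e t) (Real.cos (v t)) (Real.sin (v t)) (Real.cos (s t)) (Real.sin (s t))
        hden' he' hpy
end

section
/- Under Gauss' variational equations, the rotated node-vector components h_x = tan(i/2)·cos(Ω)·cos(σ) + tan(i/2)·sin(Ω)·sin(σ) and h_y = −tan(i/2)·cos(Ω)·sin(σ) + tan(i/2)·sin(Ω)·cos(σ), where σ = Ω + ω + v − s, are differentiable with derivatives h_x'(t) = (√(a(1−e²)/μ)/(1+e·cos(v)))·( h_x·h_y·sin(s) + ((1+h_x²−h_y²)/2)·cos(s) )·ϱ_N(t) and h_y'(t) = (√(a(1−e²)/μ)/(1+e·cos(v)))·( h_x·h_y·cos(s) + ((1−h_x²+h_y²)/2)·sin(s) )·ϱ_N(t) at every t; in particular these derivatives depend only on the normal perturbation ϱ_N and not on ϱ_R, ϱ_T. 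-/
open Real

lemma tan_half_mul_cot' (x : ℝ) (hc : Real.cos (x/2) ≠ 0) (hs : Real.sin x ≠ 0) :
    Real.tan (x/2) * Real.cot x = (1 - Real.tan (x/2)^2)/2 := by
  have hsin : Real.sin x = 2 * Real.sin (x/2) * Real.cos (x/2) := by
    have h := Real.sin_two_mul (x/2); rwa [show 2*(x/2) = x by ring] at h
  have hcos : Real.cos x = 2 * Real.cos (x/2)^2 - 1 := by
    have h := Real.cos_two_mul (x/2); rwa [show 2*(x/2) = x by ring] at h
  have hs2 : Real.sin (x/2) ≠ 0 := by
    intro h; apply hs; rw [hsin, h]; ring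
  rw [Real.cot_eq_cos_div_sin, Real.tan_eq_sin_div_cos, hsin, hcos]
  have hp := Real.sin_sq_add_cos_sq (x/2)
  field_simp
  linear_combination hp

lemma tan_half_ne_zero (x : ℝ) (hc : Real.cos (x/2) ≠ 0) (hs : Real.sin x ≠ 0) :
    Real.tan (x/2) ≠ 0 := by
  have hsin : Real.sin x = 2 * Real.sin (x/2) * Real.cos (x/2) := by
    have h := Real.sin_two_mul (x/2); rwa [show 2*(x/2) = x by ring] at h
  have hs2 : Real.sin (x/2) ≠ 0 := by
    intro h; apply hs; rw [hsin, h]; ring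
  rw [Real.tan_eq_sin_div_cos]
  exact div_ne_zero hs2 hc

lemma cot_eq_half (x : ℝ) (hc : Real.cos (x/2) ≠ 0) (hs : Real.sin x ≠ 0) :
    Real.cot x = (1 - Real.tan (x/2)^2) / (2 * Real.tan (x/2)) := by
  have hT := tan_half_ne_zero x hc hs
  have h := tan_half_mul_cot' x hc hs
  rw [eq_div_iff (by simpa using hT)]
  linear_combination 2 * h

lemma alg1 (K Dq T cu su cs ss ρ : ℝ) (hD : Dq ≠ 0) (hT : T ≠ 0)
    (hpy : su^2 + cu^2 = 1) :
    K / Dq * (T * cu * -(T * su) * ss + (1 + (T * cu)^2 - (-(T * su))^2) / 2 * cs) * ρ =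
    (1 + T^2) * (K * ((cu * cs - su * ss) / Dq * ρ) / 2) * cu +
      T * (-su * -(K * ((su * cs + cu * ss) * ((1 - T^2) / (2 * T)) / Dq * ρ))) := by
  field_simp
  linear_combination (-K * cs * ρ) * hpy
lemma alg2 (K Dq T cu su cs ss ρ : ℝ) (hD : Dq ≠ 0) (hT : T ≠ 0)
    (hpy : su^2 + cu^2 = 1) :
    K / Dq * (T * cu * -(T * su) * cs + (1 - (T * cu)^2 + (-(T * su))^2) / 2 * ss) * ρ =
    -((1 + T^2) * (K * ((cu * cs - su * ss) / Dq * ρ) / 2) * su +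
      T * (cu * -(K * ((su * cs + cu * ss) * ((1 - T^2) / (2 * T)) / Dq * ρ)))) := by
  field_simp
  linear_combination (-K * ss * ρ) * hpy

/-- Under Gauss' variational equations, the rotated node-vector components
h_x = tan(i/2)·cos Ω·cos σ + tan(i/2)·sin Ω·sin σ and
h_y = −tan(i/2)·cos Ω·sin σ + tan(i/2)·sin Ω·cos σ (with σ = Ω + ω + v − s) are
differentiable with the stated derivatives, which depend only on ϱ_N. -/
theorem rotated_node_deriv_depends_only_on_normal_perturbation
    (μ : ℝ) (a e i ω Ω v s ϱR ϱT ϱN : ℝ → ℝ)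
    (hμ : 0 < μ)
    (ha : ∀ t, 0 < a t)
    (he0 : ∀ t, 0 < e t) (he1 : ∀ t, e t < 1)
    (hsini : ∀ t, Real.sin (i t) ≠ 0)
    (hcosi : ∀ t, Real.cos (i t / 2) ≠ 0)
    (hden : ∀ t, 0 < 1 + e t * Real.cos (v t))
    (hA : ∀ t, HasDerivAt a
      (2 * (a t) ^ 2 / Real.sqrt (μ * a t * (1 - (e t) ^ 2)) *
        (e t * Real.sin (v t) * ϱR t + (1 + e t * Real.cos (v t)) * ϱT t)) t)
    (hE : ∀ t, HasDerivAt e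
      (Real.sqrt (a t * (1 - (e t) ^ 2) / μ) *
        (Real.sin (v t) * ϱR t +
          (e t + (2 + e t * Real.cos (v t)) * Real.cos (v t)) / (1 + e t * Real.cos (v t)) * ϱT t)) t)
    (hI : ∀ t, HasDerivAt i
      (Real.sqrt (a t * (1 - (e t) ^ 2) / μ) *
        (Real.cos (v t + ω t) / (1 + e t * Real.cos (v t)) * ϱN t)) t)
    (hΩ : ∀ t, HasDerivAt Ω
      (Real.sqrt (a t * (1 - (e t) ^ 2) / μ) *
        (Real.sin (v t + ω t) / ((1 + e t * Real.cos (v t)) * Real.sin (i t)) * ϱN t)) t)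
    (hω : ∀ t, HasDerivAt ω
      (Real.sqrt (a t * (1 - (e t) ^ 2) / μ) *
        (-(Real.cos (v t) / e t) * ϱR t +
          (2 + e t * Real.cos (v t)) * Real.sin (v t) / (e t * (1 + e t * Real.cos (v t))) * ϱT t -
          Real.sin (v t + ω t) * Real.cot (i t) / (1 + e t * Real.cos (v t)) * ϱN t)) t)
    (hV : ∀ t, HasDerivAt v
      (Real.sqrt (μ / (a t) ^ 3) * (1 + e t * Real.cos (v t)) ^ 2 / (1 - (e t) ^ 2) ^ ((3 : ℝ) / 2) +
        Real.sqrt (a t * (1 - (e t) ^ 2) / μ) *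
          (Real.cos (v t) / e t * ϱR t -
            (2 + e t * Real.cos (v t)) * Real.sin (v t) / (e t * (1 + e t * Real.cos (v t))) * ϱT t)) t)
    (hS : ∀ t, HasDerivAt s
      (Real.sqrt (μ / (a t) ^ 3) * (1 + e t * Real.cos (v t)) ^ 2 / (1 - (e t) ^ 2) ^ ((3 : ℝ) / 2)) t)
    (hx hy : ℝ → ℝ)
    (hhx : ∀ τ, hx τ = Real.tan (i τ / 2) * Real.cos (Ω τ) * Real.cos (Ω τ + ω τ + v τ - s τ) +
      Real.tan (i τ / 2) * Real.sin (Ω τ) * Real.sin (Ω τ + ω τ + v τ - s τ))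
    (hhy : ∀ τ, hy τ = -(Real.tan (i τ / 2) * Real.cos (Ω τ)) * Real.sin (Ω τ + ω τ + v τ - s τ) +
      Real.tan (i τ / 2) * Real.sin (Ω τ) * Real.cos (Ω τ + ω τ + v τ - s τ)) :
    ∀ t,
      HasDerivAt hx
        (Real.sqrt (a t * (1 - (e t) ^ 2) / μ) / (1 + e t * Real.cos (v t)) *
          (hx t * hy t * Real.sin (s t) +
            (1 + (hx t) ^ 2 - (hy t) ^ 2) / 2 * Real.cos (s t)) * ϱN t) t ∧
      HasDerivAt hy
        (Real.sqrt (a t * (1 - (e t) ^ 2) / μ) / (1 + e t * Real.cos (v t)) *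
          (hx t * hy t * Real.cos (s t) +
            (1 - (hx t) ^ 2 + (hy t) ^ 2) / 2 * Real.sin (s t)) * ϱN t) t := by
  intro t
  have hD : (1 : ℝ) + e t * Real.cos (v t) ≠ 0 := ne_of_gt (hden t)
  have hT : Real.tan (i t / 2) ≠ 0 := tan_half_ne_zero (i t) (hcosi t) (hsini t)
  -- derivative of u := ω + v - s : only the normal term survives
  have hu : HasDerivAt (fun τ => ω τ + v τ - s τ)
      (-(Real.sqrt (a t * (1 - (e t)^2) / μ) *
        (Real.sin (v t + ω t) * Real.cot (i t) / (1 + e t * Real.cos (v t)) * ϱN t))) t := by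
    have h := ((hω t).fun_add (hV t)).fun_sub (hS t)
    refine h.congr_deriv ?_
    ring
  have hi2 : HasDerivAt (fun τ => i τ / 2)
      (Real.sqrt (a t * (1 - (e t)^2) / μ) *
        (Real.cos (v t + ω t) / (1 + e t * Real.cos (v t)) * ϱN t) / 2) t := (hI t).div_const 2
  have htan : HasDerivAt (fun τ => Real.tan (i τ / 2))
      (1 / Real.cos (i t / 2) ^ 2 *
        (Real.sqrt (a t * (1 - (e t)^2) / μ) *
          (Real.cos (v t + ω t) / (1 + e t * Real.cos (v t)) * ϱN t) / 2)) t :=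
    (Real.hasDerivAt_tan (hcosi t)).comp (h₂ := Real.tan) t hi2
  have hcosu : HasDerivAt (fun τ => Real.cos (ω τ + v τ - s τ))
      (-Real.sin (ω t + v t - s t) *
        (-(Real.sqrt (a t * (1 - (e t)^2) / μ) *
          (Real.sin (v t + ω t) * Real.cot (i t) / (1 + e t * Real.cos (v t)) * ϱN t)))) t :=
    (Real.hasDerivAt_cos _).comp t hu
  have hsinu : HasDerivAt (fun τ => Real.sin (ω τ + v τ - s τ))
      (Real.cos (ω t + v t - s t) *
        (-(Real.sqrt (a t * (1 - (e t)^2) / μ) *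
          (Real.sin (v t + ω t) * Real.cot (i t) / (1 + e t * Real.cos (v t)) * ϱN t)))) t :=
    (Real.hasDerivAt_sin _).comp t hu
  have keyc : ∀ τ, Real.cos (ω τ + v τ - s τ) =
      Real.cos (Ω τ + ω τ + v τ - s τ) * Real.cos (Ω τ) +
        Real.sin (Ω τ + ω τ + v τ - s τ) * Real.sin (Ω τ) := by
    intro τ; rw [← Real.cos_sub]; congr 1; ring
  have keys : ∀ τ, Real.sin (ω τ + v τ - s τ) =
      Real.sin (Ω τ + ω τ + v τ - s τ) * Real.cos (Ω τ) -
        Real.cos (Ω τ + ω τ + v τ - s τ) * Real.sin (Ω τ) := by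
    intro τ; rw [← Real.sin_sub]; congr 1; ring
  have hxf : hx = fun τ => Real.tan (i τ / 2) * Real.cos (ω τ + v τ - s τ) := by
    funext τ; rw [hhx τ, keyc τ]; ring
  have hyf : hy = fun τ => -(Real.tan (i τ / 2) * Real.sin (ω τ + v τ - s τ)) := by
    funext τ; rw [hhy τ, keys τ]; ring
  have hP : 1 / Real.cos (i t / 2) ^ 2 = 1 + Real.tan (i t / 2) ^ 2 := by
    have h := Real.inv_one_add_tan_sq (hcosi t)
    rw [one_div, ← h, inv_inv]
  have hC := cot_eq_half (i t) (hcosi t) (hsini t)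
  have h1 : Real.cos (v t + ω t) =
      Real.cos (ω t + v t - s t) * Real.cos (s t) -
        Real.sin (ω t + v t - s t) * Real.sin (s t) := by
    rw [← Real.cos_add]; congr 1; ring
  have h2 : Real.sin (v t + ω t) =
      Real.sin (ω t + v t - s t) * Real.cos (s t) +
        Real.cos (ω t + v t - s t) * Real.sin (s t) := by
    rw [← Real.sin_add]; congr 1; ring
  constructor
  · have Hx := htan.fun_mul hcosu
    rw [← hxf] at Hx
    refine Hx.congr_deriv ?_
    simp only [hxf, hyf]
    rw [hP, hC, h1, h2]
    exact (alg1 _ _ _ _ _ _ _ _ hD hT (Real.sin_sq_add_cos_sq _)).symm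
  · have Hy := (htan.fun_mul hsinu).fun_neg
    rw [← hyf] at Hy
    refine Hy.congr_deriv ?_
    simp only [hxf, hyf]
    rw [hP, hC, h1, h2]
    exact (alg2 _ _ _ _ _ _ _ _ hD hT (Real.sin_sq_add_cos_sq _)).symm
end

section
/- For all real numbers h_x, h_y, s, σ, the identity (cos(s−σ)·(h_x²−h_y²) + 2·sin(s−σ)·h_x·h_y + cos(s+σ))² + (sin(s−σ)·(h_y²−h_x²) + 2·cos(s−σ)·h_x·h_y + sin(s+σ))² + (2·(h_x·sin(s) − h_y·cos(s)))² = (1 + h_x² + h_y²)² holds. Consequently, for ρ > 0 and κ_c > 0, the satellite-Earth vector r_es = κ_r·(cos(s−σ)(h_x²−h_y²) + 2sin(s−σ)h_xh_y + cos(s+σ), sin(s−σ)(h_y²−h_x²) + 2cos(s−σ)h_xh_y + sin(s+σ), 2(h_x sin(s) − h_y cos(s))) with κ_r = −R_e·ρ/(κ_c·(1+h_x²+h_y²)) has Euclidean norm ‖r_es‖ = R_e·ρ/κ_c (the orbital radius). -/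
open Real

/-- The bracketed vector in the ideal-element expression of the satellite-Earth vector has
squared norm (1 + h_x² + h_y²)²; consequently, with κ_r = −R_e·ρ/(κ_c·(1+h_x²+h_y²)),
the satellite-Earth vector r_es has Euclidean norm R_e·ρ/κ_c (the orbital radius). -/
theorem satellite_earth_vector_norm
    (h_x h_y s σ : ℝ) :
    (Real.cos (s - σ) * (h_x ^ 2 - h_y ^ 2) + 2 * Real.sin (s - σ) * h_x * h_y +
        Real.cos (s + σ)) ^ 2 +
      (Real.sin (s - σ) * (h_y ^ 2 - h_x ^ 2) + 2 * Real.cos (s - σ) * h_x * h_y +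
        Real.sin (s + σ)) ^ 2 +
      (2 * (h_x * Real.sin s - h_y * Real.cos s)) ^ 2 = (1 + h_x ^ 2 + h_y ^ 2) ^ 2 ∧
    ∀ (Re ρ κc : ℝ), 0 < Re → 0 < ρ → 0 < κc →
      ‖((WithLp.equiv 2 (Fin 3 → ℝ)).symm
          ![-(Re * ρ) / (κc * (1 + h_x ^ 2 + h_y ^ 2)) *
              (Real.cos (s - σ) * (h_x ^ 2 - h_y ^ 2) + 2 * Real.sin (s - σ) * h_x * h_y +
                Real.cos (s + σ)),
            -(Re * ρ) / (κc * (1 + h_x ^ 2 + h_y ^ 2)) *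
              (Real.sin (s - σ) * (h_y ^ 2 - h_x ^ 2) + 2 * Real.cos (s - σ) * h_x * h_y +
                Real.sin (s + σ)),
            -(Re * ρ) / (κc * (1 + h_x ^ 2 + h_y ^ 2)) *
              (2 * (h_x * Real.sin s - h_y * Real.cos s))] : EuclideanSpace ℝ (Fin 3))‖ =
        Re * ρ / κc := by
  have hs := Real.sin_sq_add_cos_sq s
  have hσ := Real.sin_sq_add_cos_sq σ
  have key :
      (Real.cos (s - σ) * (h_x ^ 2 - h_y ^ 2) + 2 * Real.sin (s - σ) * h_x * h_y +
        Real.cos (s + σ)) ^ 2 +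
      (Real.sin (s - σ) * (h_y ^ 2 - h_x ^ 2) + 2 * Real.cos (s - σ) * h_x * h_y +
        Real.sin (s + σ)) ^ 2 +
      (2 * (h_x * Real.sin s - h_y * Real.cos s)) ^ 2 = (1 + h_x ^ 2 + h_y ^ 2) ^ 2 := by
    rw [Real.cos_sub, Real.sin_sub, Real.cos_add, Real.sin_add]
    linear_combination
      ((Real.cos σ ^ 2 + Real.sin σ ^ 2) *
          (1 + 2 * h_y ^ 2 + h_y ^ 4 - 2 * h_x ^ 2 + 2 * h_x ^ 2 * h_y ^ 2 + h_x ^ 4) +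
        4 * h_x ^ 2) * hs +
      (1 + 2 * h_y ^ 2 - 4 * h_y ^ 2 * Real.cos s ^ 2 + h_y ^ 4 +
        8 * h_x * h_y * Real.sin s * Real.cos s - 2 * h_x ^ 2 + 4 * h_x ^ 2 * Real.cos s ^ 2 +
        2 * h_x ^ 2 * h_y ^ 2 + h_x ^ 4) * hσ
  refine ⟨key, fun Re ρ κc hRe hρ hκ => ?_⟩
  set k : ℝ := -(Re * ρ) / (κc * (1 + h_x ^ 2 + h_y ^ 2)) with hk
  have hH : (0:ℝ) < 1 + h_x ^ 2 + h_y ^ 2 := by positivity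
  rw [EuclideanSpace.norm_eq]
  simp only [WithLp.equiv_symm_apply, WithLp.ofLp_toLp, Fin.sum_univ_three, Matrix.cons_val_zero,
    Matrix.cons_val_one, Matrix.head_cons, Matrix.cons_val_two, Matrix.tail_cons,
    Real.norm_eq_abs, sq_abs]
  have hsum :
      (k * (Real.cos (s - σ) * (h_x ^ 2 - h_y ^ 2) + 2 * Real.sin (s - σ) * h_x * h_y +
        Real.cos (s + σ))) ^ 2 +
      (k * (Real.sin (s - σ) * (h_y ^ 2 - h_x ^ 2) + 2 * Real.cos (s - σ) * h_x * h_y +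
        Real.sin (s + σ))) ^ 2 +
      (k * (2 * (h_x * Real.sin s - h_y * Real.cos s))) ^ 2
      = (k * (1 + h_x ^ 2 + h_y ^ 2)) ^ 2 := by
    linear_combination k ^ 2 * key
  rw [hsum]
  rw [Real.sqrt_sq_eq_abs, abs_mul, abs_of_pos hH, hk]
  rw [abs_div, abs_neg, abs_of_pos (by positivity : (0:ℝ) < Re * ρ),
    abs_of_pos (by positivity : (0:ℝ) < κc * (1 + h_x ^ 2 + h_y ^ 2))]
  field_simp
end
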